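/- arXiv:1505.07905 — 2 statements merged into one kernel-verified Lean document; each statement's English description precedes it below -/
import Mathlib

section
/- For guaranteed scoring games G and H: Ls(G+X) ≥ Ls(H+X) for all guaranteed X if and only if Rs(G+Y) ≥ Rs(H+Y) for all guaranteed Y. -/
/-- A scoring game: `la`/`ra` are the atom values (relevant when the
corresponding option list is empty), `L`/`R` the Left and Right options. -/
inductive SG : Type
  | mk (la ra : ℝ) (L R : List SG) : SG

namespace SG

theorem sizeOf_lt_of_mem {g : SG} {l : List SG} (h : g ∈ l) : sizeOf g < sizeOf l :=
  List.sizeOf_lt_of_mem h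

noncomputable instance : DecidableEq SG := Classical.decEq _

def la : SG → ℝ | mk a _ _ _ => a
def ra : SG → ℝ | mk _ b _ _ => b
def L : SG → List SG | mk _ _ l _ => l
def R : SG → List SG | mk _ _ _ r => r

/-- The list of atom values occurring in atomic followers of a game. -/
def atomList : SG → List ℝ
  | mk a b ls rs =>
    (if ls.isEmpty then [a] else (ls.attach.map (fun x => atomList x.1)).flatten)
    ++ (if rs.isEmpty then [b] else (rs.attach.map (fun x => atomList x.1)).flatten)
decreasing_by all_goals (simp only [SG.mk.sizeOf_spec]; (first | (have := sizeOf_lt_of_mem x.2) | (have := sizeOf_lt_of_mem (by assumption : x ∈ _))); omega)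

/-- The guaranteed condition. -/
def Guaranteed : SG → Prop
  | mk a b ls rs =>
    (∀ x ∈ ls, Guaranteed x) ∧ (∀ x ∈ rs, Guaranteed x) ∧
    (ls = [] → ∀ s ∈ (mk a b ls rs).atomList, a ≤ s) ∧
    (rs = [] → ∀ s ∈ (mk a b ls rs).atomList, s ≤ b)
decreasing_by all_goals (simp only [SG.mk.sizeOf_spec]; (first | (have := sizeOf_lt_of_mem x.2) | (have := sizeOf_lt_of_mem (by assumption : x ∈ _))); omega)

/-- Disjunctive sum. -/
noncomputable def add : SG → SG → SG
  | mk a1 b1 L1 R1, mk a2 b2 L2 R2 =>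
    mk (a1 + a2) (b1 + b2)
      (L1.attach.map (fun x => add x.1 (mk a2 b2 L2 R2))
        ++ L2.attach.map (fun x => add (mk a1 b1 L1 R1) x.1))
      (R1.attach.map (fun x => add x.1 (mk a2 b2 L2 R2))
        ++ R2.attach.map (fun x => add (mk a1 b1 L1 R1) x.1))
termination_by g h => sizeOf g + sizeOf h
decreasing_by all_goals (simp only [SG.mk.sizeOf_spec]; (first | (have := sizeOf_lt_of_mem x.2) | (have := sizeOf_lt_of_mem (by assumption : x ∈ _))); omega)

/-- Left- and Right-stops (as a pair). -/
noncomputable def stops : SG → ℝ × ℝ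
  | mk a b ls rs =>
    (if ls.isEmpty then a else ((ls.attach.map (fun x => (stops x.1).2)).maximum.unbotD 0),
     if rs.isEmpty then b else ((rs.attach.map (fun x => (stops x.1).1)).minimum.untopD 0))
decreasing_by all_goals (simp only [SG.mk.sizeOf_spec]; (first | (have := sizeOf_lt_of_mem x.2) | (have := sizeOf_lt_of_mem (by assumption : x ∈ _))); omega)

noncomputable def Ls (g : SG) : ℝ := g.stops.1
noncomputable def Rs (g : SG) : ℝ := g.stops.2

/-- The conjugate: interchange Left and Right and negate atoms. -/
noncomputable def conj : SG → SG
  | mk a b ls rs =>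
    mk (-b) (-a) (rs.attach.map (fun x => conj x.1)) (ls.attach.map (fun x => conj x.1))
decreasing_by all_goals (simp only [SG.mk.sizeOf_spec]; (first | (have := sizeOf_lt_of_mem x.2) | (have := sizeOf_lt_of_mem (by assumption : x ∈ _))); omega)

/-- The game ⟨∅^s | ∅^s⟩ of a real number `s`. -/
def num (s : ℝ) : SG := mk s s [] []

/-- The zero game ⟨∅^0 | ∅^0⟩. -/
def zero : SG := num 0

/-- Waiting moves: the image of the Normal-play integer `n`. -/
def wait : ℕ → SG
  | 0 => zero
  | n + 1 => mk 0 0 [wait n] []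

/-- Birthday: the depth of the game tree. -/
def birthday : SG → ℕ
  | mk _ _ ls rs =>
    max ((ls.attach.map (fun x => birthday x.1 + 1)).maximum.unbotD 0)
        ((rs.attach.map (fun x => birthday x.1 + 1)).maximum.unbotD 0)
decreasing_by all_goals (simp only [SG.mk.sizeOf_spec]; (first | (have := sizeOf_lt_of_mem x.2) | (have := sizeOf_lt_of_mem (by assumption : x ∈ _))); omega)

/-- `Ge G H` is the order `G ≽ H`. -/
def Ge (G H : SG) : Prop :=
  ∀ X : SG, X.Guaranteed → Ls (G.add X) ≥ Ls (H.add X) ∧ Rs (G.add X) ≥ Rs (H.add X)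

/-- Equivalence `G ∼ H`. -/
def Equiv (G H : SG) : Prop := Ge G H ∧ Ge H G

/-- Right's pass-allowed Left-stop `L̲s(G) = min_n Ls(G - n̂)`. -/
noncomputable def lsU (G : SG) : ℝ := ⨅ n : ℕ, Ls (G.add (wait n).conj)

/-- Left's pass-allowed Right-stop `R̄s(G) = max_n Rs(G + n̂)`. -/
noncomputable def rsO (G : SG) : ℝ := ⨆ n : ℕ, Rs (G.add (wait n))

/-- `L̄s(G) = max_n Ls(G + n̂)`. -/
noncomputable def lsO (G : SG) : ℝ := ⨆ n : ℕ, Ls (G.add (wait n))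

/-- `R̲s(G) = min_n Rs(G + n̂)`. -/
noncomputable def rsU (G : SG) : ℝ := ⨅ n : ℕ, Rs (G.add (wait n))

/-- Identity of games: same tree structure (up to reordering of options),
with identical atoms at atomic positions. -/
def Ident : SG → SG → Prop
  | mk a1 b1 L1 R1, mk a2 b2 L2 R2 =>
    (L1 = [] ↔ L2 = []) ∧ (L1 = [] → a1 = a2) ∧
    (R1 = [] ↔ R2 = []) ∧ (R1 = [] → b1 = b2) ∧
    (∀ x ∈ L1, ∃ y : {z // z ∈ L2}, Ident x y.1) ∧
    (∀ y ∈ L2, ∃ x : {z // z ∈ L1}, Ident x.1 y) ∧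
    (∀ x ∈ R1, ∃ y : {z // z ∈ R2}, Ident x y.1) ∧
    (∀ y ∈ R2, ∃ x : {z // z ∈ R1}, Ident x.1 y)
termination_by g h => sizeOf g
decreasing_by all_goals (simp only [SG.mk.sizeOf_spec]; (first | (have := sizeOf_lt_of_mem x.2) | (have := sizeOf_lt_of_mem (by assumption : x ∈ _))); omega)

/-- `Linked H G`: `H` is linked to `G` (by some guaranteed `T`). -/
def Linked (H G : SG) : Prop :=
  ∃ T : SG, T.Guaranteed ∧ Ls (H.add T) < 0 ∧ 0 < Rs (G.add T)

/-- Replace every atom of `G` by `∅^x`. -/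
def subst (v : ℝ) : SG → SG
  | mk _ _ ls rs =>
    mk v v (ls.attach.map (fun x => subst v x.1)) (rs.attach.map (fun x => subst v x.1))
decreasing_by all_goals (simp only [SG.mk.sizeOf_spec]; (first | (have := sizeOf_lt_of_mem x.2) | (have := sizeOf_lt_of_mem (by assumption : x ∈ _))); omega)

/-- The maximum atom value in `G`. -/
noncomputable def maxAtom (G : SG) : ℝ := G.atomList.maximum.unbotD 0

/-- The minimum atom value in `G`. -/
noncomputable def minAtom (G : SG) : ℝ := G.atomList.minimum.untopD 0

theorem L_add (g h : SG) : (g.add h).L = g.L.map (·.add h) ++ h.L.map (g.add ·) := by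
  cases g with | mk a1 b1 L1 R1 => cases h with | mk a2 b2 L2 R2 =>
    rw [add]; simp [L, List.map_map, Function.comp]

theorem R_add (g h : SG) : (g.add h).R = g.R.map (·.add h) ++ h.R.map (g.add ·) := by
  cases g with | mk a1 b1 L1 R1 => cases h with | mk a2 b2 L2 R2 =>
    rw [add]; simp [R, List.map_map, Function.comp]

theorem la_add (g h : SG) : (g.add h).la = g.la + h.la := by
  cases g with | mk a1 b1 L1 R1 => cases h with | mk a2 b2 L2 R2 =>
    rw [add]; simp [la]

theorem ra_add (g h : SG) : (g.add h).ra = g.ra + h.ra := by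
  cases g with | mk a1 b1 L1 R1 => cases h with | mk a2 b2 L2 R2 =>
    rw [add]; simp [ra]

theorem Ls_def (g : SG) :
    Ls g = if g.L.isEmpty then g.la else ((g.L.map Rs).maximum.unbotD 0) := by
  cases g with | mk a b ls rs =>
    rw [show Rs = (fun g : SG => g.stops.2) from rfl, Ls, stops]; simp [L, la]

theorem Rs_def (g : SG) :
    Rs g = if g.R.isEmpty then g.ra else ((g.R.map Ls).minimum.untopD 0) := by
  cases g with | mk a b ls rs =>
    rw [show Ls = (fun g : SG => g.stops.1) from rfl, Rs, stops]; simp [R, ra]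

theorem atomList_def (g : SG) :
    g.atomList = (if g.L.isEmpty then [g.la] else (g.L.map atomList).flatten)
      ++ (if g.R.isEmpty then [g.ra] else (g.R.map atomList).flatten) := by
  cases g with | mk a b ls rs =>
    rw [atomList]; simp [L, R, la, ra, List.map_map, Function.comp]

theorem Guaranteed_def (g : SG) :
    g.Guaranteed ↔ ((∀ x ∈ g.L, Guaranteed x) ∧ (∀ x ∈ g.R, Guaranteed x) ∧
      (g.L = [] → ∀ s ∈ g.atomList, g.la ≤ s) ∧
      (g.R = [] → ∀ s ∈ g.atomList, s ≤ g.ra)) := by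
  cases g with | mk a b ls rs =>
    rw [Guaranteed]; simp [L, R, la, ra]

-- max/min helpers
theorem le_max_unbot' {l : List ℝ} {x : ℝ} (h : x ∈ l) : x ≤ l.maximum.unbotD 0 := by
  have h1 : (x : WithBot ℝ) ≤ l.maximum := List.le_maximum_of_mem' h
  cases hm : l.maximum with
  | bot => simp [hm] at h1
  | coe m => rw [hm] at h1; simpa [hm, WithBot.unbotD] using (WithBot.coe_le_coe.mp h1)

theorem max_unbot'_le {l : List ℝ} {c : ℝ} (h : ∀ x ∈ l, x ≤ c) (hne : l ≠ []) :
    l.maximum.unbotD 0 ≤ c := by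
  cases hm : l.maximum with
  | bot => simp [List.maximum_eq_bot] at hm; exact absurd hm hne
  | coe m => simpa using h m (List.maximum_mem hm)

theorem max_unbot'_mem {l : List ℝ} (hne : l ≠ []) : l.maximum.unbotD 0 ∈ l := by
  cases hm : l.maximum with
  | bot => simp [List.maximum_eq_bot] at hm; exact absurd hm hne
  | coe m => simpa using List.maximum_mem hm

theorem min_untop'_le {l : List ℝ} {x : ℝ} (h : x ∈ l) : l.minimum.untopD 0 ≤ x := by
  have h1 : l.minimum ≤ (x : WithTop ℝ) := List.minimum_le_of_mem' h
  cases hm : l.minimum with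
  | top => simp [hm] at h1
  | coe m => rw [hm] at h1; simpa [hm, WithTop.untopD] using h1

theorem le_min_untop' {l : List ℝ} {c : ℝ} (h : ∀ x ∈ l, c ≤ x) (hne : l ≠ []) :
    c ≤ l.minimum.untopD 0 := by
  cases hm : l.minimum with
  | top => simp [List.minimum_eq_top] at hm; exact absurd hm hne
  | coe m => simpa using h m (List.minimum_mem hm)

theorem min_untop'_mem {l : List ℝ} (hne : l ≠ []) : l.minimum.untopD 0 ∈ l := by
  cases hm : l.minimum with
  | top => simp [List.minimum_eq_top] at hm; exact absurd hm hne
  | coe m => simpa using List.minimum_mem hm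

-- strong induction
theorem strongInd {P : SG → Prop} (ih : ∀ g : SG, (∀ h : SG, sizeOf h < sizeOf g → P h) → P g) :
    ∀ g, P g := fun g => ih g (fun h _ => strongInd ih h)
termination_by g => sizeOf g
decreasing_by assumption

theorem sizeOf_lt_of_mem_L {g x : SG} (h : x ∈ g.L) : sizeOf x < sizeOf g := by
  cases g with | mk a b ls rs =>
    have := sizeOf_lt_of_mem (by simpa [L] using h)
    simp only [SG.mk.sizeOf_spec]; omega

theorem sizeOf_lt_of_mem_R {g x : SG} (h : x ∈ g.R) : sizeOf x < sizeOf g := by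
  cases g with | mk a b ls rs =>
    have := sizeOf_lt_of_mem (by simpa [R] using h)
    simp only [SG.mk.sizeOf_spec]; omega

-- stops vs options
theorem Rs_le_Ls_of_mem_L {g x : SG} (h : x ∈ g.L) : Rs x ≤ Ls g := by
  rw [Ls_def, if_neg (by simp [List.isEmpty_iff]; intro he; rw [he] at h; simp at h)]
  exact le_max_unbot' (List.mem_map_of_mem h)

theorem Ls_le {g : SG} {c : ℝ} (hne : g.L ≠ []) (h : ∀ x ∈ g.L, Rs x ≤ c) : Ls g ≤ c := by
  rw [Ls_def, if_neg (by simpa [List.isEmpty_iff] using hne)]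
  exact max_unbot'_le (by simpa using h) (by simpa using hne)

theorem Rs_le_Ls_of_mem_R {g x : SG} (h : x ∈ g.R) : Rs g ≤ Ls x := by
  rw [Rs_def, if_neg (by simp [List.isEmpty_iff]; intro he; rw [he] at h; simp at h)]
  exact min_untop'_le (List.mem_map_of_mem h)

theorem le_Rs {g : SG} {c : ℝ} (hne : g.R ≠ []) (h : ∀ x ∈ g.R, c ≤ Ls x) : c ≤ Rs g := by
  rw [Rs_def, if_neg (by simpa [List.isEmpty_iff] using hne)]
  exact le_min_untop' (by simpa using h) (by simpa using hne)

theorem subset_atomList_of_mem_L {g x : SG} (h : x ∈ g.L) : atomList x ⊆ atomList g := by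
  intro y hy
  rw [atomList_def g]
  apply List.mem_append_left
  rw [if_neg (by simp [List.isEmpty_iff]; intro he; rw [he] at h; simp at h)]
  exact List.mem_flatten.mpr ⟨atomList x, List.mem_map_of_mem h, hy⟩

theorem subset_atomList_of_mem_R {g x : SG} (h : x ∈ g.R) : atomList x ⊆ atomList g := by
  intro y hy
  rw [atomList_def g]
  apply List.mem_append_right
  rw [if_neg (by simp [List.isEmpty_iff]; intro he; rw [he] at h; simp at h)]
  exact List.mem_flatten.mpr ⟨atomList x, List.mem_map_of_mem h, hy⟩

theorem stops_mem_atomList : ∀ g : SG, Ls g ∈ atomList g ∧ Rs g ∈ atomList g := by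
  refine strongInd ?_
  intro g ih
  constructor
  · by_cases he : g.L = []
    · rw [Ls_def, if_pos (by simpa [List.isEmpty_iff] using he), atomList_def]
      apply List.mem_append_left
      rw [if_pos (by simpa [List.isEmpty_iff] using he)]; simp
    · rw [Ls_def, if_neg (by simpa [List.isEmpty_iff] using he)]
      have hmem := max_unbot'_mem (l := g.L.map Rs) (by simpa using he)
      obtain ⟨x, hx, hEq⟩ := List.mem_map.mp hmem
      rw [← hEq]
      exact subset_atomList_of_mem_L hx ((ih x (sizeOf_lt_of_mem_L hx)).2)
  · by_cases he : g.R = []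
    · rw [Rs_def, if_pos (by simpa [List.isEmpty_iff] using he), atomList_def]
      apply List.mem_append_right
      rw [if_pos (by simpa [List.isEmpty_iff] using he)]; simp
    · rw [Rs_def, if_neg (by simpa [List.isEmpty_iff] using he)]
      have hmem := min_untop'_mem (l := g.R.map Ls) (by simpa using he)
      obtain ⟨x, hx, hEq⟩ := List.mem_map.mp hmem
      rw [← hEq]
      exact subset_atomList_of_mem_R hx ((ih x (sizeOf_lt_of_mem_R hx)).1)

theorem atomList_add_num (s : ℝ) : ∀ g : SG, atomList (g.add (num s)) = g.atomList.map (· + s) := by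
  refine strongInd ?_
  intro g ih
  have hL : (g.add (num s)).L = g.L.map (·.add (num s)) := by
    rw [L_add, show (num s).L = [] from rfl]; simp
  have hR : (g.add (num s)).R = g.R.map (·.add (num s)) := by
    rw [R_add, show (num s).R = [] from rfl]; simp
  rw [atomList_def (g.add (num s)), atomList_def g, hL, hR, la_add, ra_add,
    show (num s).la = s from rfl, show (num s).ra = s from rfl, List.map_append]
  congr 1
  · by_cases he : g.L = []
    · simp [he]
    · rw [if_neg (by simpa [List.isEmpty_iff] using he),
        if_neg (by simpa [List.isEmpty_iff] using he)]
      rw [List.map_flatten, List.map_map, List.map_map]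
      refine congrArg List.flatten ?_
      apply List.map_congr_left
      intro x hx
      exact ih x (sizeOf_lt_of_mem_L hx)
  · by_cases he : g.R = []
    · simp [he]
    · rw [if_neg (by simpa [List.isEmpty_iff] using he),
        if_neg (by simpa [List.isEmpty_iff] using he)]
      rw [List.map_flatten, List.map_map, List.map_map]
      refine congrArg List.flatten ?_
      apply List.map_congr_left
      intro x hx
      exact ih x (sizeOf_lt_of_mem_R hx)

theorem le_maxAtom {g : SG} {x : ℝ} (h : x ∈ atomList g) : x ≤ maxAtom g := le_max_unbot' h

theorem minAtom_le {g : SG} {x : ℝ} (h : x ∈ atomList g) : minAtom g ≤ x := min_untop'_le h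

theorem num_guaranteed (s : ℝ) : (num s).Guaranteed := by
  rw [Guaranteed_def]
  have hA : (num s).atomList = [s, s] := by
    rw [atomList_def]; simp [num, L, R, la, ra]
  rw [hA]
  refine ⟨by simp [num, L], by simp [num, R], fun _ => ?_, fun _ => ?_⟩ <;>
    · intro t ht
      simp only [List.mem_cons, List.mem_singleton, List.not_mem_nil, or_false] at ht
      rcases ht with h | h <;> simp [h, num, la, ra]

theorem helper_guaranteed {Y Z : SG} (hY : Y.Guaranteed) (hZ : Z.Guaranteed) :
    (mk 0 0 [Y] [Z]).Guaranteed := by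
  rw [Guaranteed_def]
  refine ⟨?_, ?_, ?_, ?_⟩ <;> simp [L, R]
  · exact hY
  · exact hZ

/-- Left-stop comparison in all sums iff Right-stop comparison in all sums. -/
theorem ls_comparison_iff_rs_comparison (G H : SG) (hG : G.Guaranteed)
    (hH : H.Guaranteed) :
    (∀ X : SG, X.Guaranteed → Ls (G.add X) ≥ Ls (H.add X)) ↔
      (∀ Y : SG, Y.Guaranteed → Rs (G.add Y) ≥ Rs (H.add Y)) := by
  constructor
  · intro hL Y hY
    set M : ℝ := maxAtom G - Rs (G.add Y) with hM
    set X : SG := mk 0 0 [Y] [num (-M)] with hXdef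
    have hXg : X.Guaranteed := helper_guaranteed hY (num_guaranteed _)
    have h1 : Rs (H.add Y) ≤ Ls (H.add X) := by
      apply Rs_le_Ls_of_mem_L
      rw [L_add]
      apply List.mem_append_right
      simp [hXdef, L]
    have h2 : Ls (H.add X) ≤ Ls (G.add X) := hL X hXg
    have h3 : Ls (G.add X) ≤ Rs (G.add Y) := by
      apply Ls_le
      · rw [L_add]
        simp [hXdef, L]
      · intro x hx
        rw [L_add] at hx
        rcases List.mem_append.mp hx with hx | hx
        · obtain ⟨l, hl, rfl⟩ := List.mem_map.mp hx
          have h4 : Rs (l.add X) ≤ Ls (l.add (num (-M))) := by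
            apply Rs_le_Ls_of_mem_R
            rw [R_add]
            apply List.mem_append_right
            simp [hXdef, R]
          have h5 : Ls (l.add (num (-M))) ∈ atomList (l.add (num (-M))) :=
            (stops_mem_atomList _).1
          rw [atomList_add_num] at h5
          obtain ⟨y, hy, hEq⟩ := List.mem_map.mp h5
          have h6 : y ≤ maxAtom G := le_maxAtom (subset_atomList_of_mem_L hl hy)
          have : Ls (l.add (num (-M))) = y + -M := hEq.symm
          rw [this] at h4
          linarith
        · simp only [hXdef, L] at hx
          simp at hx
          rw [hx]
    linarith
  · intro hR X hX
    set M : ℝ := Ls (H.add X) - minAtom H with hM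
    set Y : SG := mk 0 0 [num M] [X] with hYdef
    have hYg : Y.Guaranteed := helper_guaranteed (num_guaranteed _) hX
    have h1 : Rs (G.add Y) ≤ Ls (G.add X) := by
      apply Rs_le_Ls_of_mem_R
      rw [R_add]
      apply List.mem_append_right
      simp [hYdef, R]
    have h2 : Rs (H.add Y) ≤ Rs (G.add Y) := hR Y hYg
    have h3 : Ls (H.add X) ≤ Rs (H.add Y) := by
      apply le_Rs
      · rw [R_add]
        simp [hYdef, R]
      · intro x hx
        rw [R_add] at hx
        rcases List.mem_append.mp hx with hx | hx
        · obtain ⟨r, hr, rfl⟩ := List.mem_map.mp hx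
          have h4 : Rs (r.add (num M)) ≤ Ls (r.add Y) := by
            apply Rs_le_Ls_of_mem_L
            rw [L_add]
            apply List.mem_append_right
            simp [hYdef, L]
          have h5 : Rs (r.add (num M)) ∈ atomList (r.add (num M)) :=
            (stops_mem_atomList _).2
          rw [atomList_add_num] at h5
          obtain ⟨y, hy, hEq⟩ := List.mem_map.mp h5
          have h6 : minAtom H ≤ y := minAtom_le (subset_atomList_of_mem_R hr hy)
          have : Rs (r.add (num M)) = y + M := hEq.symm
          rw [this] at h4
          linarith
        · simp only [hYdef, R] at hx
          simp at hx
          rw [hx]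
    linarith

end SG
end

section
/- Monotone Principle: if G is a guaranteed scoring game with at least one Left option, then for any guaranteed game A, the game ⟨G^L ∪ {A} | G^R⟩ ≽ G. -/
namespace SG

lemma max_exists' (L : List ℝ) (h : L ≠ []) : ∃ m : ℝ, L.maximum = (m : WithBot ℝ) := by
  cases h' : L.maximum with
  | bot => exact absurd (List.maximum_eq_bot.mp h') h
  | coe m => exact ⟨m, rfl⟩

lemma min_exists' (L : List ℝ) (h : L ≠ []) : ∃ m : ℝ, L.minimum = (m : WithTop ℝ) := by
  cases h' : L.minimum with
  | top => exact absurd (List.minimum_eq_top.mp h') h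
  | coe m => exact ⟨m, rfl⟩

lemma max_le_max' {L1 L2 : List ℝ} (h1 : L1 ≠ []) (h : ∀ x ∈ L1, ∃ y ∈ L2, x ≤ y) :
    L1.maximum.unbotD 0 ≤ L2.maximum.unbotD 0 := by
  obtain ⟨m, hm⟩ := max_exists' L1 h1
  obtain ⟨y, hy, hxy⟩ := h m (List.maximum_mem hm)
  obtain ⟨m2, hm2⟩ := max_exists' L2 (List.ne_nil_of_mem hy)
  have h2 := List.le_maximum_of_mem hy hm2
  rw [hm, hm2]
  simpa using hxy.trans h2

lemma min_le_min' {L1 L2 : List ℝ} (h2 : L2 ≠ []) (h : ∀ y ∈ L2, ∃ x ∈ L1, x ≤ y) :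
    L1.minimum.untopD 0 ≤ L2.minimum.untopD 0 := by
  obtain ⟨m, hm⟩ := min_exists' L2 h2
  obtain ⟨x, hx, hxy⟩ := h m (List.minimum_mem hm)
  obtain ⟨m1, hm1⟩ := min_exists' L1 (List.ne_nil_of_mem hx)
  have h1 := List.minimum_le_of_mem hx hm1
  rw [hm, hm1]
  simpa using h1.trans hxy

lemma add_mk' (a1 b1 a2 b2 : ℝ) (L1 R1 L2 R2 : List SG) :
    (mk a1 b1 L1 R1).add (mk a2 b2 L2 R2) =
      mk (a1 + a2) (b1 + b2)
        (L1.map (fun x => x.add (mk a2 b2 L2 R2)) ++ L2.map (fun x => (mk a1 b1 L1 R1).add x))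
        (R1.map (fun x => x.add (mk a2 b2 L2 R2)) ++ R2.map (fun x => (mk a1 b1 L1 R1).add x)) := by
  rw [add]
  simp

lemma Ls_mk' (a b : ℝ) (ls rs : List SG) :
    Ls (mk a b ls rs) = if ls.isEmpty then a else (ls.map Rs).maximum.unbotD 0 := by
  simp only [Ls]
  rw [stops]
  simp
  rw [show (fun (x : SG) => x.stops.2) = Rs from rfl]

lemma Rs_mk' (a b : ℝ) (ls rs : List SG) :
    Rs (mk a b ls rs) = if rs.isEmpty then b else (rs.map Ls).minimum.untopD 0 := by
  simp only [Rs]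
  rw [stops]
  simp
  rw [show (fun (x : SG) => x.stops.1) = Ls from rfl]

theorem key_mono (a b : ℝ) (A : SG) (l r : List SG) (hl : l ≠ []) :
    ∀ X : SG, Ls ((mk a b l r).add X) ≤ Ls ((mk a b (A :: l) r).add X) ∧
              Rs ((mk a b l r).add X) ≤ Rs ((mk a b (A :: l) r).add X)
  | mk c d xl xr => by
    have IHl : ∀ x ∈ xl,
        Ls ((mk a b l r).add x) ≤ Ls ((mk a b (A :: l) r).add x) ∧
        Rs ((mk a b l r).add x) ≤ Rs ((mk a b (A :: l) r).add x) := fun x hx =>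
      key_mono a b A l r hl x
    have IHr : ∀ x ∈ xr,
        Ls ((mk a b l r).add x) ≤ Ls ((mk a b (A :: l) r).add x) ∧
        Rs ((mk a b l r).add x) ≤ Rs ((mk a b (A :: l) r).add x) := fun x hx =>
      key_mono a b A l r hl x
    simp only [add_mk', Ls_mk', Rs_mk']
    constructor
    · rw [if_neg (by simp [hl]), if_neg (by simp)]
      apply max_le_max'
      · simp [hl]
      · intro x hx
        simp only [List.mem_map, List.mem_append] at hx
        obtain ⟨y, hy, rfl⟩ := hx
        rcases hy with ⟨z, hz, rfl⟩ | ⟨z, hz, rfl⟩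
        · refine ⟨Rs (z.add (mk c d xl xr)), ?_, le_rfl⟩
          simp only [List.mem_map, List.mem_append, List.mem_cons]
          exact ⟨z.add (mk c d xl xr), Or.inl ⟨z, Or.inr hz, rfl⟩, rfl⟩
        · refine ⟨Rs ((mk a b (A :: l) r).add z), ?_, (IHl z hz).2⟩
          simp only [List.mem_map, List.mem_append]
          exact ⟨(mk a b (A :: l) r).add z, Or.inr ⟨z, hz, rfl⟩, rfl⟩
    · by_cases hre : r = [] ∧ xr = []
      · obtain ⟨rfl, rfl⟩ := hre
        simp
      · have hne1 : (r.map (fun x => x.add (mk c d xl xr)) ++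
            xr.map (fun x => (mk a b l r).add x)) ≠ [] := by
          intro hcon
          rw [List.append_eq_nil_iff, List.map_eq_nil_iff, List.map_eq_nil_iff] at hcon
          exact hre hcon
        have hne2 : (r.map (fun x => x.add (mk c d xl xr)) ++
            xr.map (fun x => (mk a b (A :: l) r).add x)) ≠ [] := by
          intro hcon
          rw [List.append_eq_nil_iff, List.map_eq_nil_iff, List.map_eq_nil_iff] at hcon
          exact hre hcon
        rw [if_neg (by simpa using hne1), if_neg (by simpa using hne2)]
        apply min_le_min'
        · simpa using hne2
        · intro y hy
          simp only [List.mem_map, List.mem_append] at hy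
          obtain ⟨w, hw, rfl⟩ := hy
          rcases hw with ⟨z, hz, rfl⟩ | ⟨z, hz, rfl⟩
          · refine ⟨Ls (z.add (mk c d xl xr)), ?_, le_rfl⟩
            simp only [List.mem_map, List.mem_append]
            exact ⟨z.add (mk c d xl xr), Or.inl ⟨z, hz, rfl⟩, rfl⟩
          · refine ⟨Ls ((mk a b l r).add z), ?_, (IHr z hz).1⟩
            simp only [List.mem_map, List.mem_append]
            exact ⟨(mk a b l r).add z, Or.inr ⟨z, hz, rfl⟩, rfl⟩
termination_by X => sizeOf X
decreasing_by all_goals (simp only [SG.mk.sizeOf_spec]; (first | (have := sizeOf_lt_of_mem hx) | (have := sizeOf_lt_of_mem (by assumption : x ∈ _))); omega)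

/-- Monotone Principle: adding a Left option to a game with at least one Left
option cannot hurt Left. -/
theorem monotone_principle (G A : SG) (hG : G.Guaranteed) (hA : A.Guaranteed)
    (hne : G.L ≠ []) : (SG.mk G.la G.ra (A :: G.L) G.R).Ge G := by
  obtain ⟨a, b, l, r⟩ := G
  have hl : l ≠ [] := by simpa [L] using hne
  intro X hX
  have h := key_mono a b A l r hl X
  simp only [la, ra, L, R]
  exact ⟨h.1, h.2⟩

end SG
end
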